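/- arXiv:0904.1319 — 2 statements merged into one kernel-verified Lean document; each statement's English description precedes it below -/
import Mathlib

section
/- For any finite free graph G with n vertices, φ(G) ≥ n/ᾱ(G) ≥ n/(n − d(G)), where ᾱ(G) is the maximum size of a free independent set of G and d(G) = min over edges uv of |N(u) ∪ N(v)|. -/
open SimpleGraph

variable {V : Type*} {W : Type*}

/-- An independent set in a simple graph. -/
def IsIndep (G : SimpleGraph V) (s : Set V) : Prop :=
  ∀ ⦃u⦄, u ∈ s → ∀ ⦃v⦄, v ∈ s → ¬ G.Adj u v

/-- A maximal independent set. -/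
def IsMaxIndep (G : SimpleGraph V) (s : Set V) : Prop :=
  IsIndep G s ∧ ∀ t : Set V, IsIndep G t → s ⊆ t → s = t

/-- A free independent set: an independent set contained in at least two
distinct maximal independent sets. -/
def IsFreeIndep (G : SimpleGraph V) (s : Set V) : Prop :=
  IsIndep G s ∧ ∃ M₁ M₂ : Set V, IsMaxIndep G M₁ ∧ IsMaxIndep G M₂ ∧ M₁ ≠ M₂ ∧ s ⊆ M₁ ∧ s ⊆ M₂

/-- A free graph: every vertex lies in some free independent set. -/
def IsFreeGraph (G : SimpleGraph V) : Prop :=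
  ∀ v : V, ∃ F : Set V, IsFreeIndep G F ∧ v ∈ F

/-- A partition of the vertices into `t` free independent sets. -/
def FreePartition (G : SimpleGraph V) (t : ℕ) : Prop :=
  ∃ P : Fin t → Set V, (∀ i, IsFreeIndep G (P i)) ∧ ∀ v : V, ∃! i, v ∈ P i

/-- The free chromatic number `φ(G)` (`∞` if no free partition exists). -/
noncomputable def freeChrom (G : SimpleGraph V) : ℕ∞ :=
  sInf {t : ℕ∞ | ∃ n : ℕ, t = n ∧ FreePartition G n}

/-- The chromatic number as a natural number. -/
noncomputable def chromNum (G : SimpleGraph V) : ℕ :=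
  sInf {k : ℕ | G.Colorable k}

/-- The circular complete graph `K_{n/d}`. -/
def circKG (n d : ℕ) : SimpleGraph (Fin n) where
  Adj i j := i ≠ j ∧ d ≤ ((i : ℤ) - (j : ℤ)).natAbs ∧ ((i : ℤ) - (j : ℤ)).natAbs ≤ n - d
  symm := by
    refine ⟨?_⟩
    intro i j h
    obtain ⟨h1, h2, h3⟩ := h
    refine ⟨h1.symm, ?_, ?_⟩ <;> omega
  loopless := by refine ⟨?_⟩; intro i h; exact h.1 rfl

/-- The circular chromatic number, as a real number. -/
noncomputable def circChrom (G : SimpleGraph V) : ℝ :=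
  sInf {x : ℝ | ∃ n d : ℕ, 0 < d ∧ Nat.gcd n d = 1 ∧ x = (n : ℝ) / d ∧
    Nonempty (G →g circKG n d)}

/-- The Mycielskian of a graph. -/
def mycielskian (G : SimpleGraph V) : SimpleGraph (Option (V ⊕ V)) where
  Adj x y := match x, y with
    | some (Sum.inl u), some (Sum.inl v) => G.Adj u v
    | some (Sum.inl u), some (Sum.inr v) => G.Adj u v
    | some (Sum.inr u), some (Sum.inl v) => G.Adj u v
    | some (Sum.inr _), none => True
    | none, some (Sum.inr _) => True
    | _, _ => False
  symm := by
    refine ⟨?_⟩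
    rintro (_ | (u | u)) (_ | (v | v)) h <;> simp_all <;> exact G.adj_symm h
  loopless := by
    refine ⟨?_⟩
    rintro (_ | (u | u)) h <;> simp_all

/-- Vertex type of the iterated Mycielskian. -/
def MycV (V : Type u) : ℕ → Type u
  | 0 => V
  | t + 1 => Option (MycV V t ⊕ MycV V t)

/-- The `t`-fold iterated Mycielskian. -/
def mycIter (G : SimpleGraph V) : ∀ t : ℕ, SimpleGraph (MycV V t)
  | 0 => G
  | t + 1 => mycielskian (mycIter G t)

/-- The maximum size of a free independent set. -/
noncomputable def freeAlpha (G : SimpleGraph V) : ℕ :=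
  sSup {k : ℕ | ∃ F : Set V, IsFreeIndep G F ∧ k = F.ncard}

/-- The independence number. -/
noncomputable def alphaNum (G : SimpleGraph V) : ℕ :=
  sSup {k : ℕ | ∃ S : Set V, IsIndep G S ∧ k = S.ncard}

/-- `d(G)`: the minimum over edges `uv` of `|N(u) ∪ N(v)|`. -/
noncomputable def dMin (G : SimpleGraph V) : ℕ :=
  sInf {k : ℕ | ∃ u v : V, G.Adj u v ∧ k = (G.neighborSet u ∪ G.neighborSet v).ncard}

/-- An `(a,b)`-free coloring of `G` with `t` colors. -/
def ABFree (G : SimpleGraph V) (a b t : ℕ) : Prop :=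
  ∃ (P : Fin t → Set V) (e : Fin (t - a) → V × V),
    (∀ v : V, ∃! i, v ∈ P i) ∧
    (∀ i, IsIndep G (P i)) ∧
    (∀ i : Fin (t - a), IsFreeIndep G (P (Fin.castLE (Nat.sub_le t a) i))) ∧
    (∀ i : Fin (t - a), G.Adj (e i).1 (e i).2 ∧
      (G.neighborSet (e i).1 ∪ G.neighborSet (e i).2) ∩ P (Fin.castLE (Nat.sub_le t a) i) = ∅) ∧
    (∀ v : V, Set.ncard {i : Fin (t - a) | v = (e i).1 ∨ v = (e i).2} ≤ b)

/-- The `(a,b)`-free chromatic number `φ^a_b(G)`. -/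
noncomputable def abFreeChrom (G : SimpleGraph V) (a b : ℕ) : ℕ∞ :=
  sInf {t : ℕ∞ | ∃ n : ℕ, t = n ∧ ABFree G a b n}

/-- The Kneser graph `KG(m,n)`. -/
def kneser (m n : ℕ) : SimpleGraph {A : Finset (Fin m) // A.card = n} where
  Adj A B := A ≠ B ∧ Disjoint A.1 B.1
  symm := ⟨fun A B h => ⟨h.1.symm, h.2.symm⟩⟩
  loopless := ⟨fun A h => h.1 rfl⟩

/-- The generalized Kneser graph `KG(m,n,s)`. -/
def genKneser (m n s : ℕ) : SimpleGraph {A : Finset (Fin m) // A.card = n} where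
  Adj A B := A ≠ B ∧ (A.1 ∩ B.1).card ≤ s
  symm := ⟨fun A B h => ⟨h.1.symm, by rw [Finset.inter_comm]; exact h.2⟩⟩
  loopless := ⟨fun A h => h.1 rfl⟩

/-- 2-stability of a subset of `[m]`. -/
def TwoStable (m : ℕ) (A : Finset (Fin m)) : Prop :=
  ∀ x ∈ A, ∀ y ∈ A, x ≠ y →
    2 ≤ ((x : ℤ) - (y : ℤ)).natAbs ∧ ((x : ℤ) - (y : ℤ)).natAbs ≤ m - 2

/-- The Schrijver graph `SG(m,n)`. -/
def schrijver (m n : ℕ) :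
    SimpleGraph {A : Finset (Fin m) // A.card = n ∧ TwoStable m A} where
  Adj A B := A ≠ B ∧ Disjoint A.1 B.1
  symm := ⟨fun A B h => ⟨h.1.symm, h.2.symm⟩⟩
  loopless := ⟨fun A h => h.1 rfl⟩

section Aux

lemma freeIndep_edge {G : SimpleGraph V} {F : Set V} (hF : IsFreeIndep G F) :
    ∃ x y, G.Adj x y ∧ F ∩ (G.neighborSet x ∪ G.neighborSet y) = ∅ := by
  obtain ⟨hind, M₁, M₂, hM₁, hM₂, hne, hs₁, hs₂⟩ := hF
  have key : ∀ (A B : Set V), IsMaxIndep G A → IsMaxIndep G B → F ⊆ A → F ⊆ B →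
      (∃ x, x ∈ A ∧ x ∉ B) →
      ∃ x y, G.Adj x y ∧ F ∩ (G.neighborSet x ∪ G.neighborSet y) = ∅ := by
    rintro A B hA hB hFA hFB ⟨x, hxA, hxB⟩
    have hins : ¬ IsIndep G (insert x B) := by
      intro h
      have := hB.2 _ h (Set.subset_insert _ _)
      exact hxB (this ▸ Set.mem_insert x B)
    rw [IsIndep] at hins
    push_neg at hins
    obtain ⟨u, hu, v, hv, huv⟩ := hins
    rcases hu with rfl | hu
    · rcases hv with rfl | hv
      · exact absurd huv (G.loopless.irrefl _)
      · refine ⟨u, v, huv, ?_⟩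
        rw [Set.eq_empty_iff_forall_notMem]
        rintro z ⟨hzF, hz | hz⟩
        · exact hA.1 hxA (hFA hzF) hz
        · exact hB.1 hv (hFB hzF) hz
    · rcases hv with rfl | hv
      · refine ⟨v, u, huv.symm, ?_⟩
        rw [Set.eq_empty_iff_forall_notMem]
        rintro z ⟨hzF, hz | hz⟩
        · exact hA.1 hxA (hFA hzF) hz
        · exact hB.1 hu (hFB hzF) hz
      · exact absurd huv (hB.1 hu hv)
  by_cases h : ∃ x, x ∈ M₁ ∧ x ∉ M₂
  · exact key M₁ M₂ hM₁ hM₂ hs₁ hs₂ h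
  · push_neg at h
    exact absurd (hM₁.2 M₂ hM₂.1 h) hne

lemma exists_edge_of_free [Nonempty V] {G : SimpleGraph V} (hfree : IsFreeGraph G) :
    ∃ u v, G.Adj u v := by
  by_contra h
  push_neg at h
  obtain ⟨F, ⟨_, M₁, M₂, hM₁, hM₂, hne, _, _⟩, _⟩ := hfree (Classical.arbitrary V)
  have huniv : ∀ M : Set V, IsMaxIndep G M → M = Set.univ := fun M hM =>
    hM.2 Set.univ (fun u _ v _ => h u v) (Set.subset_univ M)
  exact hne ((huniv M₁ hM₁).trans (huniv M₂ hM₂).symm)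

lemma free_ncard_le [Fintype V] {G : SimpleGraph V} {F : Set V} (hF : IsFreeIndep G F) :
    F.ncard ≤ Fintype.card V - dMin G := by
  obtain ⟨x, y, hxy, hdisj⟩ := freeIndep_edge hF
  have h1 : dMin G ≤ (G.neighborSet x ∪ G.neighborSet y).ncard :=
    Nat.sInf_le ⟨x, y, hxy, rfl⟩
  have h2 : F.ncard + (G.neighborSet x ∪ G.neighborSet y).ncard ≤ Fintype.card V := by
    rw [← Set.ncard_union_eq (Set.disjoint_iff_inter_eq_empty.mpr hdisj)
      (Set.toFinite _) (Set.toFinite _)]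
    calc (F ∪ (G.neighborSet x ∪ G.neighborSet y)).ncard
        ≤ (Set.univ : Set V).ncard := Set.ncard_le_ncard (Set.subset_univ _) (Set.toFinite _)
      _ = Fintype.card V := by rw [Set.ncard_univ, Nat.card_eq_fintype_card]
  omega

lemma freeAlpha_le_sub [Fintype V] {G : SimpleGraph V} :
    freeAlpha G ≤ Fintype.card V - dMin G := by
  apply csSup_le'
  rintro k ⟨F, hF, rfl⟩
  exact free_ncard_le hF

lemma ncard_le_freeAlpha [Fintype V] {G : SimpleGraph V} {F : Set V}
    (hF : IsFreeIndep G F) : F.ncard ≤ freeAlpha G := by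
  apply le_csSup
  · refine ⟨Fintype.card V, ?_⟩
    rintro k ⟨F, _, rfl⟩
    calc F.ncard ≤ (Set.univ : Set V).ncard :=
          Set.ncard_le_ncard (Set.subset_univ _) (Set.toFinite _)
      _ = Fintype.card V := by rw [Set.ncard_univ, Nat.card_eq_fintype_card]
  · exact ⟨F, hF, rfl⟩

lemma freeAlpha_pos [Fintype V] [Nonempty V] {G : SimpleGraph V}
    (hfree : IsFreeGraph G) : 0 < freeAlpha G := by
  obtain ⟨F, hF, hv⟩ := hfree (Classical.arbitrary V)
  have : 0 < F.ncard := (Set.ncard_pos (Set.toFinite F)).mpr ⟨_, hv⟩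
  exact lt_of_lt_of_le this (ncard_le_freeAlpha hF)

lemma card_le_mul_freeAlpha [Fintype V] {G : SimpleGraph V} {t : ℕ}
    (h : FreePartition G t) : Fintype.card V ≤ t * freeAlpha G := by
  classical
  obtain ⟨P, hPfree, hPuniq⟩ := h
  choose f hf _ using hPuniq
  have key : (Finset.univ : Finset V).card =
      ∑ i : Fin t, (Finset.univ.filter (fun v => f v = i)).card :=
    Finset.card_eq_sum_card_fiberwise (fun v _ => Finset.mem_univ _)
  have bound : ∀ i : Fin t,
      (Finset.univ.filter (fun v => f v = i)).card ≤ freeAlpha G := by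
    intro i
    have hsub : ↑(Finset.univ.filter (fun v => f v = i)) ⊆ P i := by
      intro v hv
      simp only [Finset.coe_filter, Set.mem_setOf_eq] at hv
      exact hv.2 ▸ hf v
    calc (Finset.univ.filter (fun v => f v = i)).card
        = (↑(Finset.univ.filter (fun v => f v = i)) : Set V).ncard :=
          (Set.ncard_coe_finset _).symm
      _ ≤ (P i).ncard := Set.ncard_le_ncard hsub (Set.toFinite _)
      _ ≤ freeAlpha G := ncard_le_freeAlpha (hPfree i)
  calc Fintype.card V = ∑ i : Fin t, (Finset.univ.filter (fun v => f v = i)).card := key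
    _ ≤ ∑ _i : Fin t, freeAlpha G := Finset.sum_le_sum (fun i _ => bound i)
    _ = t * freeAlpha G := by
        simp [Finset.sum_const, Finset.card_univ]

end Aux

/-- `φ(G) ≥ n/ᾱ(G) ≥ n/(n - d(G))` for a free graph on `n` vertices. -/
theorem stmt4 {V : Type*} [Fintype V] (G : SimpleGraph V) (hfree : IsFreeGraph G) :
    (∀ t : ℕ, FreePartition G t → (Fintype.card V : ℚ) / freeAlpha G ≤ t) ∧
      (Fintype.card V : ℚ) / ((Fintype.card V : ℚ) - dMin G) ≤
        (Fintype.card V : ℚ) / freeAlpha G := by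
  constructor
  · intro t ht
    have h := card_le_mul_freeAlpha ht
    rcases Nat.eq_zero_or_pos (freeAlpha G) with h0 | hpos
    · rw [h0]
      simp
    · rw [div_le_iff₀ (by exact_mod_cast hpos)]
      exact_mod_cast h
  · cases isEmpty_or_nonempty V with
    | inl hV =>
      have hc : Fintype.card V = 0 := Fintype.card_eq_zero
      rw [hc]
      simp
    | inr hV =>
      obtain ⟨u, w, huw⟩ := exists_edge_of_free hfree
      have hαpos : 0 < freeAlpha G := freeAlpha_pos hfree
      have hαle : freeAlpha G ≤ Fintype.card V - dMin G := freeAlpha_le_sub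
      have hdle : dMin G ≤ Fintype.card V := by
        have h1 : dMin G ≤ (G.neighborSet u ∪ G.neighborSet w).ncard :=
          Nat.sInf_le ⟨u, w, huw, rfl⟩
        have h2 : (G.neighborSet u ∪ G.neighborSet w).ncard ≤ Fintype.card V := by
          calc (G.neighborSet u ∪ G.neighborSet w).ncard
              ≤ (Set.univ : Set V).ncard :=
                Set.ncard_le_ncard (Set.subset_univ _) (Set.toFinite _)
            _ = Fintype.card V := by rw [Set.ncard_univ, Nat.card_eq_fintype_card]
        omega
      have h1 : (freeAlpha G : ℚ) ≤ (Fintype.card V : ℚ) - dMin G := by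
        have : freeAlpha G + dMin G ≤ Fintype.card V := by omega
        have := (Nat.cast_le (α := ℚ)).mpr this
        push_cast at this
        linarith
      have hαq : (0:ℚ) < freeAlpha G := by exact_mod_cast hαpos
      gcongr
end

section
/- For any finite free graph G, φ(G) ≤ χ(G) + d(G), where d(G) = min over edges uv of |N(u) ∪ N(v)|. -/
open SimpleGraph

variable {V : Type*} {W : Type*}

lemma exists_maxIndep_aux {V : Type*} [Fintype V] (G : SimpleGraph V) {s : Set V}
    (hs : IsIndep G s) : ∃ M, IsMaxIndep G M ∧ s ⊆ M := by
  obtain ⟨M, hM, hmax⟩ := Set.Finite.exists_maximalFor Set.ncard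
      {t : Set V | IsIndep G t ∧ s ⊆ t} (Set.toFinite _) ⟨s, hs, subset_rfl⟩
  refine ⟨M, ⟨hM.1, fun t ht hsub => ?_⟩, hM.2⟩
  have h := @hmax t ⟨ht, hM.2.trans hsub⟩ (Set.ncard_le_ncard hsub (Set.toFinite t))
  exact Set.eq_of_subset_of_ncard_le hsub h.ge (Set.toFinite t)

lemma singleton_freeIndep_aux {V : Type*} (G : SimpleGraph V) (hfree : IsFreeGraph G)
    (w : V) : IsFreeIndep G {w} := by
  obtain ⟨F, ⟨hFi, M₁, M₂, h₁, h₂, hne, hs₁, hs₂⟩, hw⟩ := hfree w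
  refine ⟨?_, M₁, M₂, h₁, h₂, hne, ?_, ?_⟩
  · intro a ha b hb
    simp only [Set.mem_singleton_iff] at ha hb
    subst ha; subst hb; exact G.loopless.irrefl _
  · simpa using hs₁ hw
  · simpa using hs₂ hw

lemma class_freeIndep_aux {V : Type*} [Fintype V] (G : SimpleGraph V) {u v : V}
    (huv : G.Adj u v) {S : Set V} (hSi : IsIndep G S)
    (hS : ∀ x ∈ S, x ∉ G.neighborSet u ∪ G.neighborSet v) : IsFreeIndep G S := by
  have hins : ∀ w : V, (w = u ∨ w = v) → IsIndep G (insert w S) := by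
    rintro w hw a ha b hb hab
    rcases Set.mem_insert_iff.1 ha with ha' | ha' <;>
      rcases Set.mem_insert_iff.1 hb with hb' | hb' <;> subst_vars
    · exact G.loopless.irrefl _ hab
    · refine hS b hb' ?_
      rcases hw with rfl | rfl
      · exact Set.mem_union_left _ hab
      · exact Set.mem_union_right _ hab
    · refine hS a ha' ?_
      rcases hw with rfl | rfl
      · exact Set.mem_union_left _ hab.symm
      · exact Set.mem_union_right _ hab.symm
    · exact hSi ha' hb' hab
  obtain ⟨Mu, hMu, hsu⟩ := exists_maxIndep_aux G (hins u (Or.inl rfl))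
  obtain ⟨Mv, hMv, hsv⟩ := exists_maxIndep_aux G (hins v (Or.inr rfl))
  refine ⟨hSi, Mu, Mv, hMu, hMv, ?_, (Set.subset_insert _ _).trans hsu,
    (Set.subset_insert _ _).trans hsv⟩
  intro h
  exact hMu.1 (hsu (Set.mem_insert u S)) (h ▸ hsv (Set.mem_insert v S)) huv

/-- `φ(G) ≤ χ(G) + d(G)` for a finite free graph. -/
theorem stmt5 {V : Type*} [Fintype V] (G : SimpleGraph V) (hfree : IsFreeGraph G) :
    freeChrom G ≤ ((chromNum G + dMin G : ℕ) : ℕ∞) := by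
  classical
  cases isEmpty_or_nonempty V with
  | inl hE =>
    have h0 : FreePartition G 0 :=
      ⟨Fin.elim0, fun i => i.elim0, fun v => (IsEmpty.false v).elim⟩
    have hle : freeChrom G ≤ ((0 : ℕ) : ℕ∞) := sInf_le ⟨0, rfl, h0⟩
    exact hle.trans (by simp)
  | inr hN =>
    obtain ⟨w⟩ := hN
    obtain ⟨F, ⟨hFi, M₁, M₂, hM₁, hM₂, hne, _, _⟩, _⟩ := hfree w
    have hedge : ∃ u v : V, G.Adj u v := by
      by_contra h
      push_neg at h
      have huniv : ∀ M, IsMaxIndep G M → M = Set.univ := fun M hM =>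
        hM.2 Set.univ (fun a _ b _ => h a b) (Set.subset_univ M)
      exact hne ((huniv _ hM₁).trans (huniv _ hM₂).symm)
    obtain ⟨u0, v0, huv0⟩ := hedge
    -- the minimizing edge
    have hdmem : dMin G ∈ {k : ℕ | ∃ u v : V, G.Adj u v ∧
        k = (G.neighborSet u ∪ G.neighborSet v).ncard} :=
      Nat.sInf_mem ⟨_, u0, v0, huv0, rfl⟩
    obtain ⟨u, v, huv, hd⟩ := hdmem
    set D : Set V := G.neighborSet u ∪ G.neighborSet v with hD
    set k : ℕ := chromNum G with hk
    set d : ℕ := dMin G with hdm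
    have hmemc : Fintype.card V ∈ {k : ℕ | G.Colorable k} := G.colorable_of_fintype
    have hcol : G.Colorable k := Nat.sInf_mem ⟨Fintype.card V, hmemc⟩
    obtain ⟨c⟩ := hcol
    -- enumerate D
    have hcard : D.toFinset.card = d := by
      rw [hd]; exact (Set.ncard_eq_toFinset_card' D).symm
    let e : Fin d ≃ {x // x ∈ D.toFinset} := (D.toFinset.equivFinOfCardEq hcard).symm
    let Q : Fin k ⊕ Fin d → Set V :=
      Sum.elim (fun i => {x | x ∉ D ∧ c x = i}) (fun j => {(e j : V)})
    have hQfree : ∀ s, IsFreeIndep G (Q s) := by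
      rintro (i | j)
      · refine class_freeIndep_aux G huv ?_ ?_
        · intro a ha b hb hab
          exact c.valid hab (ha.2.trans hb.2.symm)
        · exact fun x hx => hx.1
      · exact singleton_freeIndep_aux G hfree _
    have hQuniq : ∀ x : V, ∃! s, x ∈ Q s := by
      intro x
      by_cases hx : x ∈ D
      · have hx' : x ∈ D.toFinset := Set.mem_toFinset.2 hx
        refine ⟨Sum.inr (e.symm ⟨x, hx'⟩), ?_, ?_⟩
        · show x ∈ {((e (e.symm ⟨x, hx'⟩)) : V)}
          simp
        · rintro (i | j) hj
          · exact absurd hx hj.1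
          · have : x = (e j : V) := hj
            have : e j = (⟨x, hx'⟩ : {x // x ∈ D.toFinset}) := Subtype.ext this.symm
            simp [← this]
      · refine ⟨Sum.inl (c x), ⟨hx, rfl⟩, ?_⟩
        rintro (i | j) hj
        · simp only [Q, Sum.elim_inl, Set.mem_setOf_eq] at hj
          simp [hj.2]
        · exfalso
          have : x = (e j : V) := hj
          apply hx
          rw [this]
          exact Set.mem_toFinset.1 (e j).2
    let P : Fin (k + d) → Set V := fun i => Q (finSumFinEquiv.symm i)
    have hpart : FreePartition G (k + d) := by
      refine ⟨P, fun i => hQfree _, fun x => ?_⟩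
      obtain ⟨s, hs, huniq⟩ := hQuniq x
      refine ⟨finSumFinEquiv s, ?_, ?_⟩
      · show x ∈ Q (finSumFinEquiv.symm (finSumFinEquiv s))
        simpa using hs
      · intro i hi
        have : finSumFinEquiv.symm i = s := huniq _ hi
        rw [← this]; simp
    calc freeChrom G ≤ ((k + d : ℕ) : ℕ∞) := sInf_le ⟨k + d, rfl, hpart⟩
      _ = ((chromNum G + dMin G : ℕ) : ℕ∞) := by rw [hk, hdm]
end
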